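/- The function f̃ is invariant under left multiplication by GL₂(R) (f̃(gM) = f̃(M) for all g ∈ GL₂(R), M ∈ 𝕄), and its values on coset representatives are: f̃(g·[[1,ĉ],[0,π]]) = χ(c) for every g ∈ GL₂(R) and c ∈ F, and f̃(g·[[π,0],[0,1]]) = 0 for every g ∈ GL₂(R). Equivalently, f̃ = Σ_{c ∈ Fˣ} χ(c)·(indicator function of the left coset GL₂(R)·[[1,ĉ],[0,π]]). -/

import Mathlib

open IsLocalRing

noncomputable section

variable (R : Type*) [CommRing R] [IsDomain R] [IsDiscreteValuationRing R]

/-- The condition defining the set `𝕄` of `2×2` matrices over `R` whose determinant has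
valuation exactly `1`. -/
def inMM (M : Matrix (Fin 2) (Fin 2) R) : Prop :=
  M.det ∈ maximalIdeal R ∧ M.det ∉ (maximalIdeal R) ^ 2

/-- The set `𝕄`, as a type. -/
abbrev MM := {M : Matrix (Fin 2) (Fin 2) R // inMM R M}

variable [Fintype (ResidueField R)] [DecidableEq (ResidueField R)]

/-- The function `f̃ : 𝕄 → ℂ`: `f̃(M) = χ(M̄₁₁·M̄₁₂)` if `M₁₁, M₁₂` are units,
`f̃(M) = χ(M̄₂₁·M̄₂₂)` if `M₂₁, M₂₂` are units, and `f̃(M) = 0` otherwise. -/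
def ftilde (M : MM R) : ℂ := by
  classical
  exact
    if IsUnit (M.1 0 0) ∧ IsUnit (M.1 0 1) then
      ((quadraticChar (ResidueField R) (residue R (M.1 0 0) * residue R (M.1 0 1)) : ℤ) : ℂ)
    else if IsUnit (M.1 1 0) ∧ IsUnit (M.1 1 1) then
      ((quadraticChar (ResidueField R) (residue R (M.1 1 0) * residue R (M.1 1 1)) : ℤ) : ℂ)
    else 0

end

noncomputable section AuxProof

variable {F : Type*} [Field F] [Fintype F] [DecidableEq F]

/-- Auxiliary function on matrices over the residue field. -/
def fvalAux (F : Type*) [Field F] [Fintype F] [DecidableEq F]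
    (N : Matrix (Fin 2) (Fin 2) F) : ℂ :=
  if N 0 0 ≠ 0 ∧ N 0 1 ≠ 0 then ((quadraticChar F (N 0 0 * N 0 1) : ℤ) : ℂ)
  else if N 1 0 ≠ 0 ∧ N 1 1 ≠ 0 then ((quadraticChar F (N 1 0 * N 1 1) : ℤ) : ℂ)
  else 0

lemma fvalAux_rank_one (v w : Fin 2 → F) (hv : v 0 ≠ 0 ∨ v 1 ≠ 0)
    (N : Matrix (Fin 2) (Fin 2) F) (hN : ∀ i j, N i j = v i * w j) :
    fvalAux F N = ((quadraticChar F (w 0 * w 1) : ℤ) : ℂ) := by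
  unfold fvalAux
  rw [hN 0 0, hN 0 1, hN 1 0, hN 1 1]
  by_cases hw0 : w 0 = 0
  · simp [hw0, quadraticChar_zero]
  by_cases hw1 : w 1 = 0
  · simp [hw1, quadraticChar_zero]
  have key : ∀ a : F, a ≠ 0 →
      ((quadraticChar F (a * w 0 * (a * w 1)) : ℤ) : ℂ) =
        ((quadraticChar F (w 0 * w 1) : ℤ) : ℂ) := by
    intro a ha
    have : a * w 0 * (a * w 1) = a ^ 2 * (w 0 * w 1) := by ring
    rw [this, map_mul, quadraticChar_sq_one' ha, one_mul]
  by_cases h0 : v 0 = 0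
  · have h1 : v 1 ≠ 0 := hv.resolve_left (by simpa using h0)
    rw [if_neg (by simp [h0]), if_pos ⟨mul_ne_zero h1 hw0, mul_ne_zero h1 hw1⟩]
    exact key _ h1
  · rw [if_pos ⟨mul_ne_zero h0 hw0, mul_ne_zero h0 hw1⟩]
    exact key _ h0

lemma decompAux (N : Matrix (Fin 2) (Fin 2) F) (hdet : N.det = 0) :
    N = 0 ∨ ∃ v w : Fin 2 → F, (v 0 ≠ 0 ∨ v 1 ≠ 0) ∧ ∀ i j, N i j = v i * w j := by
  rw [Matrix.det_fin_two] at hdet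
  have hd : N 0 0 * N 1 1 = N 0 1 * N 1 0 := sub_eq_zero.mp hdet
  by_cases hrow : N 0 0 = 0 ∧ N 0 1 = 0
  · by_cases hrow1 : N 1 0 = 0 ∧ N 1 1 = 0
    · left; ext i j; fin_cases i <;> fin_cases j <;>
        simp [hrow.1, hrow.2, hrow1.1, hrow1.2]
    · right
      refine ⟨![0, 1], ![N 1 0, N 1 1], Or.inr one_ne_zero, ?_⟩
      intro i j; fin_cases i <;> fin_cases j <;> simp [hrow.1, hrow.2]
  · right
    obtain ⟨lam, h10, h11⟩ : ∃ lam, N 1 0 = lam * N 0 0 ∧ N 1 1 = lam * N 0 1 := by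
      by_cases h00 : N 0 0 = 0
      · have h01 : N 0 1 ≠ 0 := by tauto
        refine ⟨N 1 1 * (N 0 1)⁻¹, ?_, ?_⟩
        · rw [h00, mul_zero]
          have hz : N 0 1 * N 1 0 = 0 := by rw [← hd, h00, zero_mul]
          exact (mul_eq_zero.mp hz).resolve_left h01
        · field_simp
      · refine ⟨N 1 0 * (N 0 0)⁻¹, ?_, ?_⟩
        · field_simp
        · field_simp
          linear_combination hd
    refine ⟨![1, lam], ![N 0 0, N 0 1], Or.inl one_ne_zero, ?_⟩
    intro i j; fin_cases i <;> fin_cases j <;> simp [h10, h11]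

set_option linter.unusedSectionVars false in
lemma mulVec_rank_one (G N : Matrix (Fin 2) (Fin 2) F) (v w : Fin 2 → F)
    (hN : ∀ i j, N i j = v i * w j) :
    ∀ i j, (G * N) i j = (G.mulVec v) i * w j := by
  intro i j
  rw [Matrix.mul_apply]
  simp only [hN]
  simp only [Matrix.mulVec, dotProduct, Fin.sum_univ_two]
  ring

lemma fvalAux_mul_left (G : Matrix (Fin 2) (Fin 2) F) (hG : IsUnit G)
    (N : Matrix (Fin 2) (Fin 2) F) (hdet : N.det = 0) :
    fvalAux F (G * N) = fvalAux F N := by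
  rcases decompAux N hdet with h0 | ⟨v, w, hv, hN⟩
  · rw [h0, mul_zero]
  · obtain ⟨u, rfl⟩ := hG
    have hv' : ((u : Matrix (Fin 2) (Fin 2) F).mulVec v) 0 ≠ 0 ∨ ((u : Matrix (Fin 2) (Fin 2) F).mulVec v) 1 ≠ 0 := by
      by_contra hc
      push_neg at hc
      have hGv : (u : Matrix (Fin 2) (Fin 2) F).mulVec v = 0 := by
        funext i; fin_cases i
        · exact hc.1
        · exact hc.2
      have h1 : ((u⁻¹ : (Matrix (Fin 2) (Fin 2) F)ˣ) : Matrix (Fin 2) (Fin 2) F).mulVec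
          ((u : Matrix (Fin 2) (Fin 2) F).mulVec v) = 0 := by
        rw [hGv, Matrix.mulVec_zero]
      rw [Matrix.mulVec_mulVec] at h1
      simp only [← Units.val_mul, u.inv_mul, Units.val_one, Matrix.one_mulVec] at h1
      rcases hv with h | h
      · exact h (by rw [h1]; rfl)
      · exact h (by rw [h1]; rfl)
    rw [fvalAux_rank_one v w hv N hN,
      fvalAux_rank_one _ w hv' _ (mulVec_rank_one (u : Matrix (Fin 2) (Fin 2) F) N v w hN)]

lemma isUnit_iff_residue_ne {R : Type*} [CommRing R] [IsLocalRing R] (x : R) :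
    IsUnit x ↔ residue R x ≠ 0 := by
  constructor
  · intro hx h0
    exact IsLocalRing.notMem_maximalIdeal.mpr hx (Ideal.Quotient.eq_zero_iff_mem.mp h0)
  · intro h
    by_contra hx
    exact h (Ideal.Quotient.eq_zero_iff_mem.mpr ((IsLocalRing.mem_maximalIdeal x).mpr hx))

lemma ftilde_eq_fvalAux {R : Type*} [CommRing R] [IsDomain R] [IsDiscreteValuationRing R]
    [Fintype (ResidueField R)] [DecidableEq (ResidueField R)] (M : MM R) :
    ftilde R M = fvalAux (ResidueField R) (M.1.map (residue R)) := by
  unfold ftilde fvalAux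
  simp only [isUnit_iff_residue_ne, Matrix.map_apply]
  congr

end AuxProof

lemma inMM_of_unit_mul {R : Type*} [CommRing R] [IsDomain R] [IsDiscreteValuationRing R]
    (g : (Matrix (Fin 2) (Fin 2) R)ˣ) (M : Matrix (Fin 2) (Fin 2) R)
    (h : inMM R ((g : Matrix (Fin 2) (Fin 2) R) * M)) : inMM R M := by
  obtain ⟨u, hu⟩ := (Matrix.isUnit_iff_isUnit_det _).mp g.isUnit
  have hdet : ((g : Matrix (Fin 2) (Fin 2) R) * M).det = ↑u * M.det := by
    rw [Matrix.det_mul, hu]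
  have huu : (↑u⁻¹ : R) * ↑u = 1 := by simp
  have e : M.det = ↑u⁻¹ * ((g : Matrix (Fin 2) (Fin 2) R) * M).det := by
    rw [hdet, ← mul_assoc, huu, one_mul]
  unfold inMM at h ⊢
  constructor
  · rw [e]; exact Ideal.mul_mem_left _ _ h.1
  · intro hm
    exact h.2 (by rw [hdet]; exact Ideal.mul_mem_left _ _ hm)

/-- `f̃` is invariant under left multiplication by `GL₂(R)`, and its values on
coset representatives are `f̃(g·[[1,ĉ],[0,π]]) = χ(c)` and `f̃(g·[[π,0],[0,1]]) = 0`, where `π`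
is a fixed uniformizer of `R` and `ĉ ∈ R` is a lift of `c ∈ F`. -/
theorem stmt_4 (R : Type*) [CommRing R] [IsDomain R] [IsDiscreteValuationRing R]
    [Fintype (ResidueField R)] [DecidableEq (ResidueField R)]
    (hodd : Odd (Fintype.card (ResidueField R)))
    (π : R) (hπ : maximalIdeal R = Ideal.span {π})
    (lft : ResidueField R → R) (hlft : ∀ c, residue R (lft c) = c) :
    (∀ (g : (Matrix (Fin 2) (Fin 2) R)ˣ) (M : MM R)
        (h : inMM R ((g : Matrix (Fin 2) (Fin 2) R) * M.1)),
        ftilde R ⟨(g : Matrix (Fin 2) (Fin 2) R) * M.1, h⟩ = ftilde R M) ∧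
    (∀ (g : (Matrix (Fin 2) (Fin 2) R)ˣ) (c : ResidueField R)
        (h : inMM R ((g : Matrix (Fin 2) (Fin 2) R) * !![1, lft c; 0, π])),
        ftilde R ⟨(g : Matrix (Fin 2) (Fin 2) R) * !![1, lft c; 0, π], h⟩ =
          ((quadraticChar (ResidueField R) c : ℤ) : ℂ)) ∧
    (∀ (g : (Matrix (Fin 2) (Fin 2) R)ˣ)
        (h : inMM R ((g : Matrix (Fin 2) (Fin 2) R) * !![π, 0; 0, 1])),
        ftilde R ⟨(g : Matrix (Fin 2) (Fin 2) R) * !![π, 0; 0, 1], h⟩ = 0) := by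
  have hπ0 : residue R π = 0 :=
    Ideal.Quotient.eq_zero_iff_mem.mpr (hπ ▸ Ideal.mem_span_singleton_self π)
  have hinv : ∀ (g : (Matrix (Fin 2) (Fin 2) R)ˣ) (M : MM R)
      (h : inMM R ((g : Matrix (Fin 2) (Fin 2) R) * M.1)),
      ftilde R ⟨(g : Matrix (Fin 2) (Fin 2) R) * M.1, h⟩ = ftilde R M := by
    intro g M h
    rw [ftilde_eq_fvalAux, ftilde_eq_fvalAux]
    have hmap : (((g : Matrix (Fin 2) (Fin 2) R) * M.1).map (residue R)) =
        ((g : Matrix (Fin 2) (Fin 2) R).map (residue R)) * (M.1.map (residue R)) :=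
      Matrix.map_mul
    rw [hmap]
    apply fvalAux_mul_left
    · have := g.isUnit.map (RingHom.mapMatrix (residue R))
      simpa [RingHom.mapMatrix_apply] using this
    · have hd : (residue R) M.1.det = (M.1.map (residue R)).det := by
        rw [RingHom.map_det]; rfl
      rw [← hd]
      exact Ideal.Quotient.eq_zero_iff_mem.mpr M.2.1
  refine ⟨hinv, ?_, ?_⟩
  · intro g c h
    have hN : inMM R !![1, lft c; 0, π] := inMM_of_unit_mul g _ h
    rw [hinv g ⟨_, hN⟩ h, ftilde_eq_fvalAux]
    have hmap : ((!![1, lft c; 0, π] : Matrix (Fin 2) (Fin 2) R).map (residue R)) =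
        !![1, c; 0, 0] := by
      ext i j
      fin_cases i <;> fin_cases j <;>
        simp [Matrix.map_apply, hlft, hπ0]
    rw [hmap]
    by_cases hc : c = 0
    · subst hc
      simp [fvalAux, quadraticChar_zero]
    · unfold fvalAux
      rw [if_pos]
      · norm_num
      · exact ⟨by norm_num, by simpa using hc⟩
  · intro g h
    have hN : inMM R !![π, 0; 0, 1] := inMM_of_unit_mul g _ h
    rw [hinv g ⟨_, hN⟩ h, ftilde_eq_fvalAux]
    have hmap : ((!![π, 0; 0, 1] : Matrix (Fin 2) (Fin 2) R).map (residue R)) =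
        !![0, 0; 0, 1] := by
      ext i j
      fin_cases i <;> fin_cases j <;>
        simp [Matrix.map_apply, hπ0]
    rw [hmap]
    simp [fvalAux]
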